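/- Assume X admits the compact singular value decomposition X = U·Λ·Vᵀ, where U ∈ ℝ^{N×N} is orthogonal, Λ ∈ ℝ^{N×N} is diagonal and invertible, and V ∈ ℝ^{M×N} satisfies Vᵀ·V = I_N. Then with targets Y = θ·v·vᵀ·X + Z, the gradient-flow trajectory satisfies Uᵀ·A_t·U = (Uᵀ·A_init·U)·exp(−t·Λ²) + (Uᵀ·Z·V)·Λ⁻¹·(I − exp(−t·Λ²)) + θ·(Uᵀ·v)·(Uᵀ·v)ᵀ·(I − exp(−t·Λ²)). -/

import Mathlib

open Matrix NormedSpace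

/-- If `X = U·Λ·Vᵀ` with `U` orthogonal, `Λ` diagonal and invertible,
and `Vᵀ·V = I_N`, then with targets `Y = θ·v·vᵀ·X + Z` the gradient-flow trajectory
satisfies `Uᵀ·A_t·U = (Uᵀ·A_init·U)·exp(−t·Λ²) + (Uᵀ·Z·V)·Λ⁻¹·(I − exp(−t·Λ²))
+ θ·(Uᵀ·v)·(Uᵀ·v)ᵀ·(I − exp(−t·Λ²))`. -/
theorem stmt6 (N M : ℕ) (hN : 0 < N) (hM : 0 < M)
    (X Z : Matrix (Fin N) (Fin M) ℝ)
    (U : Matrix (Fin N) (Fin N) ℝ) (hU : Uᵀ * U = 1)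
    (Λ : Matrix (Fin N) (Fin N) ℝ) (hΛdiag : Λ.IsDiag) (hΛunit : IsUnit Λ)
    (V : Matrix (Fin M) (Fin N) ℝ) (hV : Vᵀ * V = 1)
    (hX : X = U * Λ * Vᵀ)
    (v : Fin N → ℝ) (θ : ℝ)
    (Y : Matrix (Fin N) (Fin M) ℝ)
    (hY : Y = θ • (vecMulVec v v * X) + Z)
    (A_init : Matrix (Fin N) (Fin N) ℝ)
    (A : ℝ → Matrix (Fin N) (Fin N) ℝ)
    (hA : ∀ t : ℝ, A t =
      A_init * exp ((-t) • (X * Xᵀ)) +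
        Y * Xᵀ * (X * Xᵀ)⁻¹ * (1 - exp ((-t) • (X * Xᵀ)))) :
    ∀ t : ℝ, Uᵀ * A t * U =
      (Uᵀ * A_init * U) * exp ((-t) • (Λ * Λ)) +
        (Uᵀ * Z * V) * Λ⁻¹ * (1 - exp ((-t) • (Λ * Λ))) +
        θ • (vecMulVec (Uᵀ *ᵥ v) (Uᵀ *ᵥ v) * (1 - exp ((-t) • (Λ * Λ)))) := by
  intro t
  have hUU : U * Uᵀ = 1 := mul_eq_one_comm.mp hU
  have hUunit : IsUnit U := ⟨⟨U, Uᵀ, hUU, hU⟩, rfl⟩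
  have hUinv : U⁻¹ = Uᵀ := Matrix.inv_eq_left_inv hU
  have hΛs : Λᵀ = Λ := hΛdiag.isSymm
  have hdet : IsUnit Λ.det := (Matrix.isUnit_iff_isUnit_det Λ).mp hΛunit
  have hΛi : Λ * Λ⁻¹ = 1 := Matrix.mul_nonsing_inv Λ hdet
  have hΛi' : Λ⁻¹ * Λ = 1 := Matrix.nonsing_inv_mul Λ hdet
  have hXt : Xᵀ = V * Λ * Uᵀ := by
    rw [hX]; simp [Matrix.transpose_mul, hΛs, Matrix.mul_assoc]
  have hXXt : X * Xᵀ = U * (Λ * Λ) * Uᵀ := by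
    rw [hXt, hX]
    simp only [Matrix.mul_assoc]
    rw [← Matrix.mul_assoc Vᵀ V, hV, Matrix.one_mul]
  have hinv : (X * Xᵀ)⁻¹ = U * (Λ⁻¹ * Λ⁻¹) * Uᵀ := by
    rw [hXXt]
    apply Matrix.inv_eq_right_inv
    simp only [Matrix.mul_assoc]
    rw [← Matrix.mul_assoc Uᵀ U, hU, Matrix.one_mul,
      ← Matrix.mul_assoc Λ Λ⁻¹, hΛi, Matrix.one_mul,
      ← Matrix.mul_assoc Λ Λ⁻¹, hΛi, Matrix.one_mul, hUU]
  set E := exp ((-t) • (Λ * Λ)) with hE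
  have hexp : exp ((-t) • (X * Xᵀ)) = U * E * Uᵀ := by
    have h1 : (-t) • (X * Xᵀ) = U * ((-t) • (Λ * Λ)) * U⁻¹ := by
      rw [hUinv, hXXt, Matrix.mul_smul, Matrix.smul_mul]
    rw [h1, Matrix.exp_conj U ((-t) • (Λ * Λ)) hUunit, hUinv]
  have hone : (1 : Matrix (Fin N) (Fin N) ℝ) - U * E * Uᵀ = U * (1 - E) * Uᵀ := by
    rw [Matrix.mul_sub, Matrix.sub_mul, Matrix.mul_one, hUU]
  have hW : Uᵀ * (vecMulVec v v * U) = vecMulVec (Uᵀ *ᵥ v) (Uᵀ *ᵥ v) := by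
    ext i j
    simp only [Matrix.mul_apply, Matrix.vecMulVec_apply, Matrix.mulVec,
      dotProduct, Matrix.transpose_apply, Finset.sum_mul, Finset.mul_sum]
    rw [Finset.sum_comm]
    exact Finset.sum_congr rfl fun k _ => Finset.sum_congr rfl fun l _ => by ring
  have cU : ∀ (B : Matrix (Fin N) (Fin N) ℝ), Uᵀ * (U * B) = B := fun B => by
    rw [← Matrix.mul_assoc, hU, Matrix.one_mul]
  have cV : ∀ (B : Matrix (Fin N) (Fin N) ℝ), Vᵀ * (V * B) = B := fun B => by
    rw [← Matrix.mul_assoc, hV, Matrix.one_mul]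
  have cΛ : ∀ (B : Matrix (Fin N) (Fin N) ℝ), Λ * (Λ⁻¹ * B) = B := fun B => by
    rw [← Matrix.mul_assoc, hΛi, Matrix.one_mul]
  have hterm : Uᵀ * (Y * Xᵀ * (X * Xᵀ)⁻¹) * U =
      Uᵀ * Z * V * Λ⁻¹ + θ • vecMulVec (Uᵀ *ᵥ v) (Uᵀ *ᵥ v) := by
    rw [hY, hinv, hXt, hX, ← hW]
    simp only [Matrix.add_mul, Matrix.mul_add, Matrix.smul_mul, Matrix.mul_smul,
      Matrix.mul_assoc, hU, hUU, hV, hΛi, hΛi', cU, cV, cΛ, Matrix.mul_one, Matrix.one_mul]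
    rw [add_comm]
  have main : Uᵀ * A t * U =
      Uᵀ * A_init * U * E + Uᵀ * (Y * Xᵀ * (X * Xᵀ)⁻¹) * U * (1 - E) := by
    rw [hA t, hexp, hone]
    simp only [Matrix.add_mul, Matrix.mul_add, Matrix.mul_assoc, hU, hUU,
      Matrix.mul_one, Matrix.one_mul]
  rw [main, hterm]
  simp only [Matrix.add_mul, Matrix.smul_mul, add_assoc]
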